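/- Let $k$ be a field of characteristic zero, $K = k(x_1, \dots, x_m)$ with partial derivations $\partial_1, \dots, \partial_m$, and let $\omega = f_1\,dx_1 + \cdots + f_m\,dx_m$ be a closed rational $1$-form (i.e., $\partial_i(f_j) = \partial_j(f_i)$ for all $i,j$). If each $f_i$, viewed as a univariate rational function in $x_m$ over $F = k(x_1,\dots,x_{m-1})$, is written via partial fractions, then the residues of $f_m$ at its poles in $\overline{F}$ are constants: if $f_m = \partial_m(a) + \sum_j c_j \partial_m(b_j)/b_j$ with $a \in K$, $c_j \in \overline{F}$, and $b_j \in F(c_j)[x_m]$ pairwise coprime of positive degree, then $\partial_i(c_j) = 0$ for all $i = 1, \dots, m-1$. -/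

import Mathlib

open Polynomial

lemma mu_add {L : Type*} [Field L] (α : L) {x y : L[X]} (hx : x ≠ 0)
    (hy : (X - C α) ^ (rootMultiplicity α x + 1) ∣ y) :
    x + y ≠ 0 ∧ rootMultiplicity α (x + y) = rootMultiplicity α x := by
  have hxy : x + y ≠ 0 := by
    intro h
    have hxeq : x = -y := by linear_combination h
    have : (X - C α) ^ (rootMultiplicity α x + 1) ∣ x := by
      have := hy.neg_right; rwa [← hxeq] at this
    have := (le_rootMultiplicity_iff hx).mpr this
    omega
  refine ⟨hxy, le_antisymm ?_ ?_⟩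
  · rw [← Nat.lt_add_one_iff, ← not_le, le_rootMultiplicity_iff hxy]
    intro hdvd
    have : (X - C α) ^ (rootMultiplicity α x + 1) ∣ x := by
      have := dvd_sub hdvd hy
      simpa using this
    have := (le_rootMultiplicity_iff hx).mpr this
    omega
  · rw [le_rootMultiplicity_iff hxy]
    exact dvd_add (pow_rootMultiplicity_dvd x α)
      (dvd_trans (pow_dvd_pow _ (Nat.le_succ _)) hy)

lemma coprime_eval_ne_zero {L : Type*} [Field L] {u v : L[X]} (h : IsCoprime u v)
    {α : L} (hv : v.IsRoot α) : ¬ u.IsRoot α := by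
  obtain ⟨s, t, hst⟩ := h
  intro hu
  have := congrArg (Polynomial.eval α) hst
  simp [Polynomial.IsRoot.def.mp hu, Polynomial.IsRoot.def.mp hv] at this

lemma residue_key {L : Type*} [Field L] [IsAlgClosed L] [CharZero L] {n : ℕ}
    (b : Fin n → L[X]) (hbdeg : ∀ j, 0 < (b j).degree)
    (hbcop : ∀ j₁ j₂, j₁ ≠ j₂ → IsCoprime (b j₁) (b j₂))
    (e : Fin n → L) (h : RatFunc L)
    (heq : ∑ j, RatFunc.C (e j) * (algebraMap L[X] (RatFunc L) (derivative (b j)) /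
        algebraMap L[X] (RatFunc L) (b j))
      = algebraMap L[X] (RatFunc L)
          (derivative h.num * h.denom - h.num * derivative h.denom) /
        algebraMap L[X] (RatFunc L) (h.denom ^ 2)) :
    ∀ j, e j = 0 := by
  intro j
  by_contra hej
  set U := h.num with hUdef
  set V := h.denom with hVdef
  set W := derivative U * V - U * derivative V with hWdef
  have hV : V ≠ 0 := h.denom_ne_zero
  have hbne : ∀ l, b l ≠ 0 := by
    intro l hl
    have := hbdeg l
    rw [hl] at this
    simp at this
  set Q : L[X] := ∏ l, b l with hQdef
  have hQ : Q ≠ 0 := Finset.prod_ne_zero_iff.mpr fun l _ => hbne l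
  set P : L[X] := ∑ l, Polynomial.C (e l) * derivative (b l) *
    ∏ t ∈ Finset.univ.erase l, b t with hPdef
  have hQfac : ∀ l : Fin n, Q = b l * ∏ t ∈ Finset.univ.erase l, b t := fun l =>
    (Finset.mul_prod_erase _ _ (Finset.mem_univ l)).symm
  -- rewrite the LHS sum as a single fraction
  have key1 : (∑ l, RatFunc.C (e l) * (algebraMap L[X] (RatFunc L) (derivative (b l)) /
      algebraMap L[X] (RatFunc L) (b l))) * algebraMap L[X] (RatFunc L) Q
      = algebraMap L[X] (RatFunc L) P := by
    rw [hPdef, map_sum, Finset.sum_mul]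
    refine Finset.sum_congr rfl fun l _ => ?_
    have hbl : algebraMap L[X] (RatFunc L) (b l) ≠ 0 := RatFunc.algebraMap_ne_zero (hbne l)
    rw [map_mul, map_mul, RatFunc.algebraMap_C, hQfac l, map_mul]
    field_simp
  -- the polynomial identity
  have main : P * V ^ 2 = W * Q := by
    have h2 : algebraMap L[X] (RatFunc L) P / algebraMap L[X] (RatFunc L) Q
        = algebraMap L[X] (RatFunc L) W / algebraMap L[X] (RatFunc L) (V ^ 2) := by
      rw [← key1, ← heq]
      rw [mul_div_assoc, div_self (RatFunc.algebraMap_ne_zero hQ), mul_one]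
    rw [div_eq_div_iff (RatFunc.algebraMap_ne_zero hQ)
      (RatFunc.algebraMap_ne_zero (pow_ne_zero 2 hV)), ← map_mul, ← map_mul] at h2
    exact RatFunc.algebraMap_injective L h2
  obtain ⟨α, hα⟩ := IsAlgClosed.exists_root (b j) (hbdeg j).ne'
  have hμb : 0 < rootMultiplicity α (b j) := (rootMultiplicity_pos (hbne j)).mpr hα
  have hrest_root : ¬ (∏ t ∈ Finset.univ.erase j, b t).IsRoot α := by
    intro hroot
    rw [IsRoot, eval_prod] at hroot
    obtain ⟨t, ht, hte⟩ := Finset.prod_eq_zero_iff.mp hroot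
    exact coprime_eval_ne_zero (hbcop t j (Finset.ne_of_mem_erase ht)) hα hte
  have hrest_ne : (∏ t ∈ Finset.univ.erase j, b t) ≠ 0 :=
    Finset.prod_ne_zero_iff.mpr fun t _ => hbne t
  have hderiv_ne : derivative (b j) ≠ 0 := by
    intro hd
    have := natDegree_eq_zero_of_derivative_eq_zero hd
    have h2 := natDegree_pos_iff_degree_pos.mpr (hbdeg j)
    omega
  have htermj_ne : Polynomial.C (e j) * derivative (b j) *
      (∏ t ∈ Finset.univ.erase j, b t) ≠ 0 :=
    mul_ne_zero (mul_ne_zero (by simpa using hej) hderiv_ne) hrest_ne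
  have hμtermj : rootMultiplicity α (Polynomial.C (e j) * derivative (b j) *
      (∏ t ∈ Finset.univ.erase j, b t)) = rootMultiplicity α (b j) - 1 := by
    rw [rootMultiplicity_mul htermj_ne,
      rootMultiplicity_mul (mul_ne_zero (by simpa using hej) hderiv_ne),
      rootMultiplicity_C, derivative_rootMultiplicity_of_root hα,
      rootMultiplicity_eq_zero hrest_root]
    omega
  have hPsplit : P = Polynomial.C (e j) * derivative (b j) *
      (∏ t ∈ Finset.univ.erase j, b t) +
      ∑ l ∈ Finset.univ.erase j, Polynomial.C (e l) * derivative (b l) *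
        ∏ t ∈ Finset.univ.erase l, b t := by
    rw [hPdef, ← Finset.add_sum_erase _ _ (Finset.mem_univ j)]
  have hdvd_rest : (X - C α) ^ (rootMultiplicity α (Polynomial.C (e j) * derivative (b j) *
      (∏ t ∈ Finset.univ.erase j, b t)) + 1) ∣
      ∑ l ∈ Finset.univ.erase j, Polynomial.C (e l) * derivative (b l) *
        ∏ t ∈ Finset.univ.erase l, b t := by
    rw [hμtermj]
    have hpow : rootMultiplicity α (b j) - 1 + 1 = rootMultiplicity α (b j) := by omega
    rw [hpow]
    refine Finset.dvd_sum fun l hl => ?_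
    have hjl : j ∈ Finset.univ.erase l :=
      Finset.mem_erase.mpr ⟨(Finset.ne_of_mem_erase hl).symm, Finset.mem_univ j⟩
    exact dvd_mul_of_dvd_right
      ((pow_rootMultiplicity_dvd (b j) α).trans (Finset.dvd_prod_of_mem _ hjl)) _
  obtain ⟨hPne, hμP⟩ : P ≠ 0 ∧ rootMultiplicity α P = rootMultiplicity α (b j) - 1 := by
    rw [hPsplit]
    have := mu_add α htermj_ne hdvd_rest
    exact ⟨this.1, this.2.trans hμtermj⟩
  have hW : W ≠ 0 := by
    intro hW0
    rw [hW0, zero_mul] at main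
    exact hPne (by simpa [pow_ne_zero 2 hV] using mul_eq_zero.mp main)
  -- take root multiplicities in the main identity
  have hμmain : rootMultiplicity α P + 2 * rootMultiplicity α V
      = rootMultiplicity α W + rootMultiplicity α Q := by
    have h1 := congrArg (rootMultiplicity α) main
    rw [rootMultiplicity_mul (by exact mul_ne_zero hPne (pow_ne_zero 2 hV)),
      rootMultiplicity_mul (mul_ne_zero hW hQ), sq,
      rootMultiplicity_mul (mul_ne_zero hV hV)] at h1
    omega
  have hμQ : rootMultiplicity α Q = rootMultiplicity α (b j) := by
    rw [hQfac j, rootMultiplicity_mul (mul_ne_zero (hbne j) hrest_ne),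
      rootMultiplicity_eq_zero hrest_root, add_zero]
  have hμVW : 2 * rootMultiplicity α V = rootMultiplicity α W + 1 := by omega
  have hμV : 0 < rootMultiplicity α V := by omega
  have hVroot : V.IsRoot α := (rootMultiplicity_pos hV).mp hμV
  have hU : U ≠ 0 := by
    intro hU0
    rw [hU0, derivative_zero, zero_mul, zero_mul, sub_zero] at hWdef
    exact hW hWdef
  have hUroot : ¬ U.IsRoot α := coprime_eval_ne_zero h.isCoprime_num_denom hVroot
  have hV' : derivative V ≠ 0 := by
    intro hd
    have h0 := natDegree_eq_zero_of_derivative_eq_zero hd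
    obtain ⟨a, ha⟩ := natDegree_eq_zero.mp h0
    rw [← ha] at hVroot hV
    simp [IsRoot] at hVroot
    simp [hVroot] at hV
  have hx_ne : -(U * derivative V) ≠ 0 := neg_ne_zero.mpr (mul_ne_zero hU hV')
  have hμx : rootMultiplicity α (-(U * derivative V)) = rootMultiplicity α V - 1 := by
    have : -(U * derivative V) = Polynomial.C (-1) * (U * derivative V) := by
      simp
    rw [this, rootMultiplicity_mul (by simpa using mul_ne_zero hU hV'),
      rootMultiplicity_C, rootMultiplicity_mul (mul_ne_zero hU hV'),
      rootMultiplicity_eq_zero hUroot, derivative_rootMultiplicity_of_root hVroot]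
    omega
  have hdvd_y : (X - C α) ^ (rootMultiplicity α (-(U * derivative V)) + 1) ∣
      derivative U * V := by
    rw [hμx]
    have hpow : rootMultiplicity α V - 1 + 1 = rootMultiplicity α V := by omega
    rw [hpow]
    exact dvd_mul_of_dvd_right (pow_rootMultiplicity_dvd V α) _
  have hμW : rootMultiplicity α W = rootMultiplicity α V - 1 := by
    have hWeq : W = -(U * derivative V) + derivative U * V := by rw [hWdef]; ring
    rw [hWeq, (mu_add α hx_ne hdvd_y).2, hμx]
  omega
open Polynomial

lemma Dm_algebraMap {L : Type*} [Field L] (Dm : Derivation L (RatFunc L) (RatFunc L))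
    (hX : Dm RatFunc.X = 1) (q : L[X]) :
    Dm (algebraMap L[X] (RatFunc L) q)
      = algebraMap L[X] (RatFunc L) (derivative q) := by
  induction q using Polynomial.induction_on' with
  | add p q hp hq => rw [map_add, map_add, hp, hq, derivative_add, map_add]
  | monomial m a =>
    have harg : (algebraMap L[X] (RatFunc L)) (C a * X ^ m) = a • RatFunc.X ^ m := by
      rw [map_mul, map_pow, RatFunc.algebraMap_C, RatFunc.algebraMap_X,
        ← RatFunc.smul_eq_C_mul]
    rw [← Polynomial.C_mul_X_pow_eq_monomial, derivative_C_mul_X_pow, harg,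
      Derivation.map_smul, Derivation.leibniz_pow, hX,
      map_mul, map_pow, RatFunc.algebraMap_C, RatFunc.algebraMap_X,
      ← RatFunc.smul_eq_C_mul]
    simp only [Algebra.smul_def, map_mul, map_natCast, Algebra.algebraMap_self_apply]
    ring

lemma Dm_frac {L : Type*} [Field L] (Dm : Derivation L (RatFunc L) (RatFunc L))
    (hX : Dm RatFunc.X = 1) (h : RatFunc L) :
    Dm h = algebraMap L[X] (RatFunc L)
        (derivative h.num * h.denom - h.num * derivative h.denom) /
      algebraMap L[X] (RatFunc L) (h.denom ^ 2) := by
  have hV : algebraMap L[X] (RatFunc L) h.denom ≠ 0 :=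
    RatFunc.algebraMap_ne_zero h.denom_ne_zero
  conv_lhs => rw [← h.num_div_denom]
  rw [Derivation.leibniz_div, Dm_algebraMap Dm hX, Dm_algebraMap Dm hX]
  rw [smul_sub, smul_eq_mul, smul_eq_mul, smul_eq_mul, smul_eq_mul]
  rw [map_sub, map_mul, map_mul, map_pow]
  field_simp

section

variable {L : Type*} [Field L] (d : RatFunc L → RatFunc L)
  (hadd : ∀ a b, d (a + b) = d a + d b)
  (hmul : ∀ a b, d (a * b) = a * d b + b * d a)

include hadd in
lemma d_zero : d 0 = 0 := by
  have := hadd 0 0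
  rw [add_zero] at this
  exact (left_eq_add.mp this)

include hadd hmul in
lemma d_one : d 1 = 0 := by
  have := hmul 1 1
  rw [mul_one, one_mul] at this
  exact (left_eq_add.mp this)

include hadd in
lemma d_sum {ι : Type*} (s : Finset ι) (f : ι → RatFunc L) :
    d (∑ x ∈ s, f x) = ∑ x ∈ s, d (f x) := by
  classical
  induction s using Finset.induction_on with
  | empty => simpa using d_zero d hadd
  | @insert _ _ hx ih =>
    rw [Finset.sum_insert hx, Finset.sum_insert hx, hadd, ih]

include hadd hmul in
lemma d_inv (v : RatFunc L) (hv : v ≠ 0) : d v⁻¹ = -(d v) * (v⁻¹) ^ 2 := by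
  have h1 : d (v * v⁻¹) = 0 := by
    rw [mul_inv_cancel₀ hv]
    exact d_one d hadd hmul
  rw [hmul] at h1
  have h2 : v * d v⁻¹ = -(v⁻¹ * d v) := by linear_combination h1
  calc d v⁻¹ = v⁻¹ * (v * d v⁻¹) := by rw [inv_mul_cancel_left₀ hv]
    _ = v⁻¹ * -(v⁻¹ * d v) := by rw [h2]
    _ = -(d v) * (v⁻¹) ^ 2 := by ring

include hadd hmul in
lemma d_comm_logderiv (Dm : Derivation L (RatFunc L) (RatFunc L))
    (B : RatFunc L) (hB : B ≠ 0) (hcB : d (Dm B) = Dm (d B)) :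
    d (Dm B / B) = Dm (d B / B) := by
  rw [div_eq_mul_inv, div_eq_mul_inv, hmul, d_inv d hadd hmul B hB, hcB]
  rw [Derivation.leibniz, Derivation.leibniz_inv]
  rw [smul_eq_mul, smul_eq_mul, smul_eq_mul]
  ring

end



/-- The embedding of `RatFunc F` into `RatFunc E` induced by a field embedding
`ψ : F →+* E`, sending `num/denom` to `(num.map ψ)/(denom.map ψ)`. -/
noncomputable def liftRF {F E : Type*} [Field F] [Field E] (ψ : F →+* E)
    (f : RatFunc F) : RatFunc E :=
  algebraMap (Polynomial E) (RatFunc E) (f.num.map ψ) /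
    algebraMap (Polynomial E) (RatFunc E) (f.denom.map ψ)

set_option maxHeartbeats 1000000 in
/-- Key step in the proof of the closed 1-form integration theorem: let
`F = k(x₁,…,x_{m-1})` (realized with `p = m-1` variables), `K = F(x_m)` and `F̄` the
algebraic closure of `F`.  Let `∂₁,…,∂_{m-1}` (given on `F̄` by `δ` and extended to
`F̄(x_m)` by `D'`, acting trivially on `x_m`) and `∂_m = d/dx_m` (given by `Dm`) be the
commuting partial derivations.  Suppose `ω = f₁ dx₁ + ⋯ + f_{m-1} dx_{m-1} + f_m dx_m`
is a closed 1-form with coefficients in `K`, and `f_m = ∂_m(a) + ∑_j c_j ∂_m(b_j)/b_j`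
with `a ∈ K`, `c_j ∈ F̄` and `b_j` pairwise coprime polynomials in `x_m` of positive
degree.  Then the residues `c_j` are constants for the other derivations:
`∂_i(c_j) = 0` for all `i = 1,…,m-1`. -/
theorem stmt_5 (k : Type*) [Field k] [CharZero k] (p : ℕ)
    (δ : Fin p →
      AlgebraicClosure (FractionRing (MvPolynomial (Fin p) k)) →
      AlgebraicClosure (FractionRing (MvPolynomial (Fin p) k)))
    (hδadd : ∀ i a b, δ i (a + b) = δ i a + δ i b)
    (hδmul : ∀ i a b, δ i (a * b) = a * δ i b + b * δ i a)
    (hδX : ∀ i j : Fin p,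
      δ i (algebraMap (FractionRing (MvPolynomial (Fin p) k))
          (AlgebraicClosure (FractionRing (MvPolynomial (Fin p) k)))
          (algebraMap (MvPolynomial (Fin p) k) (FractionRing (MvPolynomial (Fin p) k))
            (MvPolynomial.X j))) = if i = j then 1 else 0)
    (D' : Fin p →
      RatFunc (AlgebraicClosure (FractionRing (MvPolynomial (Fin p) k))) →
      RatFunc (AlgebraicClosure (FractionRing (MvPolynomial (Fin p) k))))
    (hD'add : ∀ i a b, D' i (a + b) = D' i a + D' i b)
    (hD'mul : ∀ i a b, D' i (a * b) = a * D' i b + b * D' i a)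
    (hD'C : ∀ i a, D' i (RatFunc.C a) = RatFunc.C (δ i a))
    (hD'X : ∀ i, D' i RatFunc.X = 0)
    (Dm : Derivation (AlgebraicClosure (FractionRing (MvPolynomial (Fin p) k)))
      (RatFunc (AlgebraicClosure (FractionRing (MvPolynomial (Fin p) k))))
      (RatFunc (AlgebraicClosure (FractionRing (MvPolynomial (Fin p) k)))))
    (hDmX : Dm RatFunc.X = 1)
    (hcomm : ∀ i z, D' i (Dm z) = Dm (D' i z))
    (ff : Fin p → RatFunc (FractionRing (MvPolynomial (Fin p) k)))
    (fm : RatFunc (FractionRing (MvPolynomial (Fin p) k)))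
    (hclosed₁ : ∀ i : Fin p,
      D' i (liftRF (algebraMap _ _) fm) = Dm (liftRF (algebraMap _ _) (ff i)))
    (hclosed₂ : ∀ i j : Fin p,
      D' i (liftRF (algebraMap _ _) (ff j)) = D' j (liftRF (algebraMap _ _) (ff i)))
    (n : ℕ) (a : RatFunc (FractionRing (MvPolynomial (Fin p) k)))
    (c : Fin n → AlgebraicClosure (FractionRing (MvPolynomial (Fin p) k)))
    (b : Fin n → Polynomial (AlgebraicClosure (FractionRing (MvPolynomial (Fin p) k))))
    (hbdeg : ∀ j, 0 < (b j).degree)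
    (hbcop : ∀ j₁ j₂, j₁ ≠ j₂ → IsCoprime (b j₁) (b j₂))
    (hdec : liftRF (algebraMap _ _) fm = Dm (liftRF (algebraMap _ _) a) +
      ∑ j, RatFunc.C (c j) *
        Dm (algebraMap (Polynomial _) (RatFunc _) (b j)) /
        algebraMap (Polynomial _) (RatFunc _) (b j)) :
    ∀ (i : Fin p) (j : Fin n), δ i (c j) = 0 := by
  intro i j
  haveI : CharZero (FractionRing (MvPolynomial (Fin p) k)) :=
    charZero_of_injective_algebraMap
      (IsFractionRing.injective (MvPolynomial (Fin p) k) (FractionRing (MvPolynomial (Fin p) k)))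
  haveI : CharZero (AlgebraicClosure (FractionRing (MvPolynomial (Fin p) k))) :=
    charZero_of_injective_algebraMap
      (algebraMap (FractionRing (MvPolynomial (Fin p) k))
        (AlgebraicClosure (FractionRing (MvPolynomial (Fin p) k)))).injective
  have hbne : ∀ l, b l ≠ 0 := by
    intro l hl
    have := hbdeg l
    rw [hl] at this
    simp at this
  have hBne : ∀ l, algebraMap _
      (RatFunc (AlgebraicClosure (FractionRing (MvPolynomial (Fin p) k)))) (b l) ≠ 0 :=
    fun l => RatFunc.algebraMap_ne_zero (hbne l)
  have hterm : ∀ l : Fin n,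
      D' i (RatFunc.C (c l) * Dm (algebraMap _ _ (b l)) / algebraMap _ _ (b l))
        = Dm ((c l) • (D' i (algebraMap _ _ (b l)) / algebraMap _ _ (b l)))
          + RatFunc.C (δ i (c l)) *
            (Dm (algebraMap _ _ (b l)) / algebraMap _ _ (b l)) := by
    intro l
    rw [mul_div_assoc, hD'mul, hD'C,
      d_comm_logderiv (D' i) (hD'add i) (hD'mul i) Dm _ (hBne l) (hcomm i _),
      Derivation.map_smul, RatFunc.smul_eq_C_mul]
    ring
  have h1 : Dm (liftRF (algebraMap _ _) (ff i)) =
      Dm (D' i (liftRF (algebraMap _ _) a)) +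
      ∑ l, (Dm ((c l) • (D' i (algebraMap _ _ (b l)) / algebraMap _ _ (b l)))
        + RatFunc.C (δ i (c l)) *
          (Dm (algebraMap _ _ (b l)) / algebraMap _ _ (b l))) := by
    rw [← hclosed₁ i, hdec, hD'add, hcomm i, d_sum (D' i) (hD'add i)]
    congr 1
    exact Finset.sum_congr rfl fun l _ => hterm l
  set h : RatFunc (AlgebraicClosure (FractionRing (MvPolynomial (Fin p) k))) :=
    liftRF (algebraMap _ _) (ff i) - D' i (liftRF (algebraMap _ _) a)
      - ∑ l, (c l) • (D' i (algebraMap _ _ (b l)) / algebraMap _ _ (b l)) with hh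
  have h2 : ∑ l, RatFunc.C (δ i (c l)) *
      (algebraMap _ _ (Polynomial.derivative (b l)) / algebraMap _ _ (b l)) = Dm h := by
    rw [hh, map_sub, map_sub, map_sum, h1]
    have hDmb : ∀ l : Fin n, Dm (algebraMap _ _ (b l))
        = algebraMap _ _ (Polynomial.derivative (b l)) := fun l => Dm_algebraMap Dm hDmX (b l)
    simp only [hDmb]
    rw [Finset.sum_add_distrib]
    ring
  exact residue_key b hbdeg hbcop (fun l => δ i (c l)) h
    (h2.trans (Dm_frac Dm hDmX h)) j
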